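/- arXiv:2208.06496 — 6 statements merged into one kernel-verified Lean document; each statement's English description precedes it below -/
import Mathlib

section
/- For every h ∈ ℝⁿ the candidate-state map h ↦ c(h) = Φ(W_c x + U_c (r(h) ⊙ h) + b_c) is (Fréchet) differentiable at h, with derivative v ↦ Φ'(z) ⊙ (U_c (h ⊙ ((r(h) ⊙ (1 − r(h))) ⊙ (U_r v)) + r(h) ⊙ v)), where z = W_c x + U_c (r(h) ⊙ h) + b_c and Φ'(t) = 1 − tanh(t)² is applied entrywise; and the operator 2-norm of this derivative satisfies ‖D c(h)‖₂ ≤ (δ_r ‖U_r‖₂ max_i |h_i| + max_i r(h)_i) ‖U_c‖₂, where δ_r = max_i r(h)_i (1 − r(h)_i). -/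
noncomputable section

/-- The sigmoid function `σ(t) = 1/(1+exp(-t))`. -/
def sigmoid (t : ℝ) : ℝ := 1 / (1 + Real.exp (-t))

/-- The operator norm of a square matrix induced by the Euclidean norm. -/
def opNorm2 {n : ℕ} (M : Matrix (Fin n) (Fin n) ℝ) : ℝ :=
  ‖Matrix.toEuclideanCLM (𝕜 := ℝ) M‖

lemma sigmoid_pos (t : ℝ) : 0 < sigmoid t := by unfold sigmoid; positivity

lemma sigmoid_lt_one (t : ℝ) : sigmoid t < 1 := by
  unfold sigmoid
  rw [div_lt_one (by positivity)]
  linarith [Real.exp_pos (-t)]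

lemma hasDerivAt_sigmoid (t : ℝ) :
    HasDerivAt sigmoid (sigmoid t * (1 - sigmoid t)) t := by
  have h1 : (0:ℝ) < 1 + Real.exp (-t) := by positivity
  have hfun : sigmoid = fun y => (1 + Real.exp (-y))⁻¹ := by
    funext y; simp [sigmoid, one_div]
  have h2 := (((Real.hasDerivAt_exp (-t)).comp t ((hasDerivAt_id t).neg)).const_add 1).inv
    (ne_of_gt h1)
  rw [hfun]
  convert (by have h3 := h2; simp at h3; exact h3 :
    HasDerivAt (fun y => (1 + Real.exp (-y))⁻¹) (Real.exp (-t) / (1 + Real.exp (-t)) ^ 2) t) using 1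
  simp only [hfun]
  field_simp
  ring

lemma hasDerivAt_tanh' (t : ℝ) :
    HasDerivAt Real.tanh (1 - Real.tanh t ^ 2) t := by
  have hc : Real.cosh t ≠ 0 := (Real.cosh_pos t).ne'
  have hfun : Real.tanh = fun s => Real.sinh s / Real.cosh s := by
    funext s; exact Real.tanh_eq_sinh_div_cosh s
  have h := (Real.hasDerivAt_sinh t).div (Real.hasDerivAt_cosh t) hc
  rw [hfun]
  refine h.congr_deriv ?_
  beta_reduce
  have hid : Real.cosh t ^ 2 - Real.sinh t ^ 2 = 1 := Real.cosh_sq_sub_sinh_sq t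
  field_simp

lemma tanh_sq_le_one (t : ℝ) : Real.tanh t ^ 2 ≤ 1 := by
  have hc : (0:ℝ) < Real.cosh t := Real.cosh_pos t
  have hid : Real.cosh t ^ 2 - Real.sinh t ^ 2 = 1 := Real.cosh_sq_sub_sinh_sq t
  rw [Real.tanh_eq_sinh_div_cosh, div_pow, div_le_one (by positivity)]
  nlinarith

lemma toEuclideanCLM_apply' {n : ℕ} (A : Matrix (Fin n) (Fin n) ℝ)
    (v : EuclideanSpace ℝ (Fin n)) (i : Fin n) :
    Matrix.toEuclideanCLM (𝕜 := ℝ) A v i = A.mulVec v i := rfl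

lemma diag_clm_norm_le {n : ℕ} (d : Fin n → ℝ) (b : ℝ) (hb : 0 ≤ b)
    (hd : ∀ i, |d i| ≤ b) :
    ‖Matrix.toEuclideanCLM (𝕜 := ℝ) (Matrix.diagonal d)‖ ≤ b := by
  apply ContinuousLinearMap.opNorm_le_bound _ hb
  intro v
  have happ : ∀ i, (Matrix.toEuclideanCLM (𝕜 := ℝ) (Matrix.diagonal d) v) i = d i * v i := by
    intro i
    rw [toEuclideanCLM_apply', Matrix.mulVec_diagonal]
  rw [EuclideanSpace.norm_eq, EuclideanSpace.norm_eq]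
  rw [show b * Real.sqrt (∑ i, ‖v i‖ ^ 2) = Real.sqrt (b ^ 2 * ∑ i, ‖v i‖ ^ 2) by
    rw [Real.sqrt_mul (sq_nonneg b), Real.sqrt_sq hb]]
  apply Real.sqrt_le_sqrt
  rw [Finset.mul_sum]
  apply Finset.sum_le_sum
  intro i _
  rw [happ i]
  have h1 : ‖d i * v i‖ = |d i| * ‖v i‖ := by simp [abs_mul]
  rw [h1, mul_pow]
  have h2 := hd i
  nlinarith [abs_nonneg (d i), norm_nonneg (v i), sq_nonneg (‖v i‖),
    mul_le_mul h2 h2 (abs_nonneg (d i)) hb]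

/-- the candidate-state map `h ↦ c(h) = Φ(W_c x + U_c (r(h) ⊙ h) + b_c)`
(with `Φ = tanh` and `r(h) = σ(W_r x + U_r h + b_r)`) is Fréchet differentiable at every `h`,
with derivative `v ↦ Φ'(z) ⊙ (U_c (h ⊙ ((r(h) ⊙ (1 - r(h))) ⊙ (U_r v)) + r(h) ⊙ v))` where
`z = W_c x + U_c (r(h) ⊙ h) + b_c` and `Φ'(t) = 1 - tanh(t)²`, and the operator 2-norm of
this derivative is at most `(δ_r ‖U_r‖₂ max_i |h_i| + max_i r(h)_i) ‖U_c‖₂` with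
`δ_r = max_i r(h)_i (1 - r(h)_i)`. -/
theorem candidate_state_deriv {n m : ℕ} (x : Fin m → ℝ)
    (Wr Wc : Matrix (Fin n) (Fin m) ℝ) (Ur Uc : Matrix (Fin n) (Fin n) ℝ)
    (br bc : EuclideanSpace ℝ (Fin n)) (h : EuclideanSpace ℝ (Fin n)) :
    let r : EuclideanSpace ℝ (Fin n) → EuclideanSpace ℝ (Fin n) :=
      fun h => WithLp.toLp 2 (fun i => sigmoid (Wr.mulVec x i + Ur.mulVec h i + br i))
    let c : EuclideanSpace ℝ (Fin n) → EuclideanSpace ℝ (Fin n) :=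
      fun h => WithLp.toLp 2 (fun i => Real.tanh (Wc.mulVec x i + Uc.mulVec (fun j => r h j * h j) i + bc i))
    let z : Fin n → ℝ :=
      fun i => Wc.mulVec x i + Uc.mulVec (fun j => r h j * h j) i + bc i
    let J : Matrix (Fin n) (Fin n) ℝ :=
      Matrix.diagonal (fun i => 1 - Real.tanh (z i) ^ 2) *
        (Uc * (Matrix.diagonal (fun i => h i) * Matrix.diagonal (fun i => r h i * (1 - r h i)) * Ur
          + Matrix.diagonal (fun i => r h i)))
    HasFDerivAt c (Matrix.toEuclideanCLM (𝕜 := ℝ) J) h ∧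
      (∀ v : EuclideanSpace ℝ (Fin n), ∀ i,
        Matrix.toEuclideanCLM (𝕜 := ℝ) J v i
          = (1 - Real.tanh (z i) ^ 2) *
              Uc.mulVec (fun j => h j * ((r h j * (1 - r h j)) * Ur.mulVec v j) + r h j * v j) i) ∧
      ‖Matrix.toEuclideanCLM (𝕜 := ℝ) J‖
        ≤ ((⨆ i, r h i * (1 - r h i)) * opNorm2 Ur * (⨆ i, |h i|) + ⨆ i, r h i) * opNorm2 Uc := by
  intro r c z J
  -- Part 2: pointwise formula for the derivative
  have hJv : ∀ v : EuclideanSpace ℝ (Fin n), ∀ i,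
      Matrix.toEuclideanCLM (𝕜 := ℝ) J v i
        = (1 - Real.tanh (z i) ^ 2) *
            Uc.mulVec (fun j => h j * ((r h j * (1 - r h j)) * Ur.mulVec v j) + r h j * v j) i := by
    intro v i
    rw [toEuclideanCLM_apply']
    show (Matrix.diagonal (fun i => 1 - Real.tanh (z i) ^ 2) *
        (Uc * (Matrix.diagonal (fun i => h i) * Matrix.diagonal (fun i => r h i * (1 - r h i)) * Ur
          + Matrix.diagonal (fun i => r h i)))).mulVec v i = _
    rw [← Matrix.mulVec_mulVec, Matrix.mulVec_diagonal]
    congr 1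
    rw [← Matrix.mulVec_mulVec]
    congr 1
    funext j
    rw [Matrix.add_mulVec]
    simp only [Pi.add_apply, ← Matrix.mulVec_mulVec, Matrix.mulVec_diagonal]
  refine ⟨?_, hJv, ?_⟩
  · -- Part 1: differentiability
    classical
    let u : Fin n → ℝ := fun j => Wr.mulVec x j + Ur.mulVec h j + br j
    let ℓ : Fin n → (Fin n → ℝ) →L[ℝ] ℝ := fun j =>
      (ContinuousLinearMap.proj j).comp (Matrix.mulVecLin Ur).toContinuousLinearMap
    let AP : (Fin n → ℝ) →L[ℝ] (Fin n → ℝ) := (Matrix.mulVecLin J).toContinuousLinearMap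
    let yh : Fin n → ℝ := fun j => h j
    have hcoord : ∀ i : Fin n, HasFDerivAt
        (fun y : Fin n → ℝ => Real.tanh (Wc.mulVec x i +
          Uc.mulVec (fun j => sigmoid (Wr.mulVec x j + Ur.mulVec y j + br j) * y j) i + bc i))
        ((ContinuousLinearMap.proj i).comp AP) yh := by
      intro i
      have hu : ∀ j, HasFDerivAt
          (fun y : Fin n → ℝ => Wr.mulVec x j + Ur.mulVec y j + br j) (ℓ j) yh := by
        intro j
        have hlin : HasFDerivAt (fun y : Fin n → ℝ => Ur.mulVec y j) (ℓ j) yh :=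
          (ℓ j).hasFDerivAt
        exact (hlin.const_add _).add_const _
      have hs : ∀ j, HasFDerivAt
          (fun y : Fin n → ℝ => sigmoid (Wr.mulVec x j + Ur.mulVec y j + br j))
          ((sigmoid (u j) * (1 - sigmoid (u j))) • ℓ j) yh := by
        intro j
        exact (hasDerivAt_sigmoid (u j)).comp_hasFDerivAt (f := fun y : Fin n → ℝ => Wr.mulVec x j + Ur.mulVec y j + br j) yh (hu j)
      have hmul : ∀ j, HasFDerivAt
          (fun y : Fin n → ℝ => sigmoid (Wr.mulVec x j + Ur.mulVec y j + br j) * y j)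
          (sigmoid (u j) • ContinuousLinearMap.proj j +
            yh j • ((sigmoid (u j) * (1 - sigmoid (u j))) • ℓ j)) yh := by
        intro j
        have hproj : HasFDerivAt (fun y : Fin n → ℝ => y j)
            (ContinuousLinearMap.proj (R := ℝ) (φ := fun _ : Fin n => ℝ) j) yh :=
          (ContinuousLinearMap.proj (R := ℝ) (φ := fun _ : Fin n => ℝ) j).hasFDerivAt
        exact (hs j).mul hproj
      have hsum : HasFDerivAt
          (fun y : Fin n → ℝ => ∑ j, Uc i j *
            (sigmoid (Wr.mulVec x j + Ur.mulVec y j + br j) * y j))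
          (∑ j, Uc i j • (sigmoid (u j) • ContinuousLinearMap.proj j +
            yh j • ((sigmoid (u j) * (1 - sigmoid (u j))) • ℓ j))) yh :=
        HasFDerivAt.fun_sum fun j _ => (hmul j).const_mul (Uc i j)
      have hinner : HasFDerivAt
          (fun y : Fin n → ℝ => Wc.mulVec x i +
            Uc.mulVec (fun j => sigmoid (Wr.mulVec x j + Ur.mulVec y j + br j) * y j) i + bc i)
          (∑ j, Uc i j • (sigmoid (u j) • ContinuousLinearMap.proj j +
            yh j • ((sigmoid (u j) * (1 - sigmoid (u j))) • ℓ j))) yh :=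
        (hsum.const_add _).add_const _
      have htanh := (hasDerivAt_tanh' (z i)).comp_hasFDerivAt_of_eq yh hinner rfl
      have hCLM : (1 - Real.tanh (z i) ^ 2) •
          (∑ j, Uc i j • (sigmoid (u j) • ContinuousLinearMap.proj j +
            yh j • ((sigmoid (u j) * (1 - sigmoid (u j))) • ℓ j)))
          = (ContinuousLinearMap.proj i).comp AP := by
        ext v
        have hrhs : ((ContinuousLinearMap.proj (R := ℝ) (φ := fun _ : Fin n => ℝ) i).comp AP) v
            = (1 - Real.tanh (z i) ^ 2) *
              Uc.mulVec (fun j => h j * ((r h j * (1 - r h j)) * Ur.mulVec v j) + r h j * v j) i :=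
          hJv (WithLp.toLp 2 v) i
        rw [hrhs]
        simp only [ContinuousLinearMap.smul_apply, ContinuousLinearMap.sum_apply,
          ContinuousLinearMap.add_apply, ContinuousLinearMap.coe_comp', Function.comp_apply,
          ContinuousLinearMap.proj_apply, Pi.smul_apply, smul_eq_mul,
          LinearMap.coe_toContinuousLinearMap', Matrix.mulVecLin_apply]
        show (1 - Real.tanh (z i) ^ 2) * ∑ j, _ = _
        congr 1
        show ∑ j, Uc i j * (sigmoid (u j) * v j + yh j *
            (sigmoid (u j) * (1 - sigmoid (u j)) * Ur.mulVec v j)) = _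
        show _ = ∑ j, Uc i j * (h j * ((r h j * (1 - r h j)) * Ur.mulVec v j) + r h j * v j)
        refine Finset.sum_congr rfl fun j _ => ?_
        have hrj : r h j = sigmoid (u j) := rfl
        rw [hrj]
        ring
      rw [← hCLM]
      exact htanh
    have hP : HasFDerivAt
        (fun y : Fin n → ℝ => fun i => Real.tanh (Wc.mulVec x i +
          Uc.mulVec (fun j => sigmoid (Wr.mulVec x j + Ur.mulVec y j + br j) * y j) i + bc i))
        AP yh := hasFDerivAt_pi'' hcoord
    let eL : EuclideanSpace ℝ (Fin n) ≃L[ℝ] (Fin n → ℝ) := EuclideanSpace.equiv (Fin n) ℝ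
    have hEL : HasFDerivAt (⇑eL) (eL : EuclideanSpace ℝ (Fin n) →L[ℝ] (Fin n → ℝ)) h :=
      (eL : EuclideanSpace ℝ (Fin n) →L[ℝ] (Fin n → ℝ)).hasFDerivAt
    have hfinal :=
      ((eL.symm : (Fin n → ℝ) →L[ℝ] EuclideanSpace ℝ (Fin n))).hasFDerivAt.comp h (hP.comp h hEL)
    have hCLMeq : ((eL.symm : (Fin n → ℝ) →L[ℝ] EuclideanSpace ℝ (Fin n))).comp
        (AP.comp (eL : EuclideanSpace ℝ (Fin n) →L[ℝ] (Fin n → ℝ)))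
        = Matrix.toEuclideanCLM (𝕜 := ℝ) J := by
      refine ContinuousLinearMap.ext fun v => ?_
      rfl
    rw [hCLMeq] at hfinal
    exact hfinal
  · -- Part 3: norm bound
    set T := Matrix.toEuclideanCLM (n := Fin n) (𝕜 := ℝ) with hT
    have hδ0 : 0 ≤ ⨆ i, r h i * (1 - r h i) := by
      apply Real.iSup_nonneg
      intro i
      have h1 := sigmoid_pos (Wr.mulVec x i + Ur.mulVec h i + br i)
      have h2 := sigmoid_lt_one (Wr.mulVec x i + Ur.mulVec h i + br i)
      have : r h i = sigmoid (Wr.mulVec x i + Ur.mulVec h i + br i) := rfl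
      nlinarith
    have hH0 : 0 ≤ ⨆ i, |h i| := Real.iSup_nonneg fun i => abs_nonneg _
    have hR0 : 0 ≤ ⨆ i, r h i := Real.iSup_nonneg fun i => (sigmoid_pos _).le
    have hD1 : ‖T (Matrix.diagonal (fun i => 1 - Real.tanh (z i) ^ 2))‖ ≤ 1 := by
      apply diag_clm_norm_le _ _ zero_le_one
      intro i
      rw [abs_le]
      constructor <;> nlinarith [tanh_sq_le_one (z i), sq_nonneg (Real.tanh (z i))]
    have hDh : ‖T (Matrix.diagonal (fun i => h i))‖ ≤ ⨆ i, |h i| := by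
      apply diag_clm_norm_le _ _ hH0
      intro i
      exact le_ciSup (f := fun i => |h i|) (Set.Finite.bddAbove (Set.finite_range _)) i
    have hDd : ‖T (Matrix.diagonal (fun i => r h i * (1 - r h i)))‖ ≤ ⨆ i, r h i * (1 - r h i) := by
      apply diag_clm_norm_le _ _ hδ0
      intro i
      have h1 := sigmoid_pos (Wr.mulVec x i + Ur.mulVec h i + br i)
      have h2 := sigmoid_lt_one (Wr.mulVec x i + Ur.mulVec h i + br i)
      have hri : r h i = sigmoid (Wr.mulVec x i + Ur.mulVec h i + br i) := rfl
      have habs : |r h i * (1 - r h i)| = r h i * (1 - r h i) := by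
        rw [abs_of_nonneg]; nlinarith
      rw [habs]
      exact le_ciSup (f := fun i => r h i * (1 - r h i)) (Set.Finite.bddAbove (Set.finite_range _)) i
    have hDr : ‖T (Matrix.diagonal (fun i => r h i))‖ ≤ ⨆ i, r h i := by
      apply diag_clm_norm_le _ _ hR0
      intro i
      have h1 := sigmoid_pos (Wr.mulVec x i + Ur.mulVec h i + br i)
      have hri : r h i = sigmoid (Wr.mulVec x i + Ur.mulVec h i + br i) := rfl
      have habs : |r h i| = r h i := abs_of_nonneg (by rw [hri]; exact h1.le)
      rw [habs]
      exact le_ciSup (f := fun i => r h i) (Set.Finite.bddAbove (Set.finite_range _)) i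
    have hJe : T J = T (Matrix.diagonal (fun i => 1 - Real.tanh (z i) ^ 2)) *
        (T Uc * (T (Matrix.diagonal (fun i => h i)) *
          T (Matrix.diagonal (fun i => r h i * (1 - r h i))) * T Ur +
            T (Matrix.diagonal (fun i => r h i)))) := by
      rw [hT, map_mul, map_mul, map_add, map_mul, map_mul]
    rw [hJe]
    have key : ‖T Uc * (T (Matrix.diagonal (fun i => h i)) *
          T (Matrix.diagonal (fun i => r h i * (1 - r h i))) * T Ur +
            T (Matrix.diagonal (fun i => r h i)))‖
        ≤ ‖T Uc‖ * ((⨆ i, |h i|) * (⨆ i, r h i * (1 - r h i)) * ‖T Ur‖ + ⨆ i, r h i) := by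
      refine (norm_mul_le _ _).trans ?_
      have hsum : ‖T (Matrix.diagonal (fun i => h i)) *
          T (Matrix.diagonal (fun i => r h i * (1 - r h i))) * T Ur +
            T (Matrix.diagonal (fun i => r h i))‖
          ≤ (⨆ i, |h i|) * (⨆ i, r h i * (1 - r h i)) * ‖T Ur‖ + ⨆ i, r h i := by
        refine (norm_add_le _ _).trans ?_
        have h1 : ‖T (Matrix.diagonal (fun i => h i)) *
            T (Matrix.diagonal (fun i => r h i * (1 - r h i))) * T Ur‖
            ≤ (⨆ i, |h i|) * (⨆ i, r h i * (1 - r h i)) * ‖T Ur‖ := by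
          refine (norm_mul_le _ _).trans ?_
          have h2 := (norm_mul_le (T (Matrix.diagonal (fun i => h i)))
            (T (Matrix.diagonal (fun i => r h i * (1 - r h i)))))
          have h3 : ‖T (Matrix.diagonal fun i => h i) *
              T (Matrix.diagonal fun i => r h i * (1 - r h i))‖
              ≤ (⨆ i, |h i|) * (⨆ i, r h i * (1 - r h i)) :=
            h2.trans (mul_le_mul hDh hDd (norm_nonneg _) hH0)
          exact mul_le_mul_of_nonneg_right h3 (norm_nonneg _)
        exact add_le_add h1 hDr
      exact mul_le_mul_of_nonneg_left hsum (norm_nonneg _)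
    refine (norm_mul_le _ _).trans ?_
    have hfin := mul_le_mul hD1 key (norm_nonneg _) zero_le_one
    refine hfin.trans ?_
    have : opNorm2 Ur = ‖T Ur‖ := rfl
    rw [this]
    have h2 : opNorm2 Uc = ‖T Uc‖ := rfl
    rw [h2]
    nlinarith [norm_nonneg (T Ur), norm_nonneg (T Uc), hδ0, hH0, hR0]
end
end

section
/- (Quantitative Corollary 1, first part) Let h ∈ ℝⁿ with |h_i| ≤ 1 for every i, and let ε ≥ 0. Suppose every gate entry is within ε of 0 or 1 in the sense that u(h)_i (1 − u(h)_i) ≤ ε and r(h)_i (1 − r(h)_i) ≤ ε for all i. Then the constants α = δ_u (max_i |h_i| + max_i |c(h)_i|) ‖U_u‖₂ + max_i (1 − u(h)_i) and β = (max_i u(h)_i)(δ_r ‖U_r‖₂ max_i |h_i| + max_i r(h)_i), with δ_u = max_i u(h)_i (1 − u(h)_i) and δ_r = max_i r(h)_i (1 − r(h)_i), satisfy α + β ≤ 2 + ε (2‖U_u‖₂ + ‖U_r‖₂). -/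
noncomputable section

lemma abs_tanh_le_one (t : ℝ) : |Real.tanh t| ≤ 1 := by
  have hc : 0 < Real.cosh t := Real.cosh_pos t
  have hs : Real.cosh t ^ 2 = Real.sinh t ^ 2 + 1 := Real.cosh_sq t
  rw [Real.tanh_eq_sinh_div_cosh, abs_div, abs_of_pos hc, div_le_one hc]
  nlinarith [abs_nonneg (Real.sinh t), sq_abs (Real.sinh t)]

/-- Quantitative Corollary 1, first part: if `|h_i| ≤ 1` for all `i`, `ε ≥ 0`,
and every gate entry is within `ε` of `0` or `1` in the sense that
`u(h)_i (1 - u(h)_i) ≤ ε` and `r(h)_i (1 - r(h)_i) ≤ ε` for all `i`, then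
`α + β ≤ 2 + ε (2‖U_u‖₂ + ‖U_r‖₂)`. -/
theorem gru_alpha_beta_near_binary_gates {n m : ℕ} (x : Fin m → ℝ)
    (Wr Wu Wc : Matrix (Fin n) (Fin m) ℝ) (Ur Uu Uc : Matrix (Fin n) (Fin n) ℝ)
    (br bu bc : EuclideanSpace ℝ (Fin n)) (h : EuclideanSpace ℝ (Fin n))
    (hh : ∀ i, |h i| ≤ 1) (ε : ℝ) (hε : 0 ≤ ε) :
    let r : EuclideanSpace ℝ (Fin n) → EuclideanSpace ℝ (Fin n) :=
      fun h => WithLp.toLp 2 (fun i => sigmoid (Wr.mulVec x i + Ur.mulVec h i + br i))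
    let u : EuclideanSpace ℝ (Fin n) → EuclideanSpace ℝ (Fin n) :=
      fun h => WithLp.toLp 2 (fun i => sigmoid (Wu.mulVec x i + Uu.mulVec h i + bu i))
    let c : EuclideanSpace ℝ (Fin n) → EuclideanSpace ℝ (Fin n) :=
      fun h => WithLp.toLp 2 (fun i => Real.tanh (Wc.mulVec x i + Uc.mulVec (fun j => r h j * h j) i + bc i))
    let δu : ℝ := ⨆ i, u h i * (1 - u h i)
    let δr : ℝ := ⨆ i, r h i * (1 - r h i)
    let α : ℝ := δu * ((⨆ i, |h i|) + ⨆ i, |c h i|) * opNorm2 Uu + ⨆ i, (1 - u h i)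
    let β : ℝ := (⨆ i, u h i) * (δr * opNorm2 Ur * (⨆ i, |h i|) + ⨆ i, r h i)
    (∀ i, u h i * (1 - u h i) ≤ ε) →
    (∀ i, r h i * (1 - r h i) ≤ ε) →
    α + β ≤ 2 + ε * (2 * opNorm2 Uu + opNorm2 Ur) := by
  intro r u c δu δr α β hu hr
  have hu0 : ∀ i, 0 < u h i := fun i => sigmoid_pos _
  have hu1 : ∀ i, u h i < 1 := fun i => sigmoid_lt_one _
  have hr0 : ∀ i, 0 < r h i := fun i => sigmoid_pos _
  have hr1 : ∀ i, r h i < 1 := fun i => sigmoid_lt_one _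
  have hδu0 : 0 ≤ δu := Real.iSup_nonneg fun i =>
    mul_nonneg (hu0 i).le (by linarith [hu1 i])
  have hδuε : δu ≤ ε := Real.iSup_le hu hε
  have hδr0 : 0 ≤ δr := Real.iSup_nonneg fun i =>
    mul_nonneg (hr0 i).le (by linarith [hr1 i])
  have hδrε : δr ≤ ε := Real.iSup_le hr hε
  have hB0 : 0 ≤ ⨆ i, |h i| := Real.iSup_nonneg fun i => abs_nonneg _
  have hB1 : (⨆ i, |h i|) ≤ 1 := Real.iSup_le hh zero_le_one
  have hC0 : 0 ≤ ⨆ i, |c h i| := Real.iSup_nonneg fun i => abs_nonneg _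
  have hC1 : (⨆ i, |c h i|) ≤ 1 := Real.iSup_le (fun i => abs_tanh_le_one _) zero_le_one
  have hD0 : 0 ≤ ⨆ i, (1 - u h i) := Real.iSup_nonneg fun i => by linarith [hu1 i]
  have hD1 : (⨆ i, (1 - u h i)) ≤ 1 := Real.iSup_le (fun i => by linarith [hu0 i]) zero_le_one
  have hE0 : 0 ≤ ⨆ i, u h i := Real.iSup_nonneg fun i => (hu0 i).le
  have hE1 : (⨆ i, u h i) ≤ 1 := Real.iSup_le (fun i => (hu1 i).le) zero_le_one
  have hG0 : 0 ≤ ⨆ i, r h i := Real.iSup_nonneg fun i => (hr0 i).le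
  have hG1 : (⨆ i, r h i) ≤ 1 := Real.iSup_le (fun i => (hr1 i).le) zero_le_one
  have hNU : 0 ≤ opNorm2 Uu := norm_nonneg _
  have hNR : 0 ≤ opNorm2 Ur := norm_nonneg _
  show δu * ((⨆ i, |h i|) + ⨆ i, |c h i|) * opNorm2 Uu + (⨆ i, (1 - u h i)) +
      (⨆ i, u h i) * (δr * opNorm2 Ur * (⨆ i, |h i|) + ⨆ i, r h i) ≤ _
  nlinarith [mul_nonneg hδu0 hNU, mul_nonneg hδr0 hNR,
    mul_nonneg (mul_nonneg hδr0 hNR) hB0,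
    mul_le_mul hδuε (by linarith : (⨆ i, |h i|) + (⨆ i, |c h i|) ≤ 2)
      (by linarith) hε,
    mul_le_mul (mul_le_mul hδrε le_rfl hNR hε) hB1 hB0 (mul_nonneg hε hNR),
    mul_nonneg hE0 (add_nonneg (mul_nonneg (mul_nonneg hδr0 hNR) hB0) hG0)]
end
end

section
/- (Quantitative Corollary 1, second part) Let h ∈ ℝⁿ with |h_i| ≤ 1 for every i, and let ε ≥ 0. Suppose the gates are within ε of constant 0/1 vectors, i.e. one of the following four cases holds for all i: (a) u(h)_i ≤ ε; (b) u(h)_i ≥ 1 − ε and r(h)_i ≤ ε; (c) u(h)_i ≥ 1 − ε and r(h)_i ≥ 1 − ε; (d) u(h)_i ≤ ε and r(h)_i ≥ 1 − ε or r(h)_i ≤ ε. Then the constants α = δ_u (max_i |h_i| + max_i |c(h)_i|) ‖U_u‖₂ + max_i (1 − u(h)_i) and β = (max_i u(h)_i)(δ_r ‖U_r‖₂ max_i |h_i| + max_i r(h)_i), with δ_u = max_i u(h)_i (1 − u(h)_i) and δ_r = max_i r(h)_i (1 − r(h)_i), satisfy α + β ≤ 1 + ε (2‖U_u‖₂ +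 ‖U_r‖₂ + 2). -/
noncomputable section

private lemma gru_arith_A (Nu Nr Sh Sc du dr su sr s1 ε : ℝ)
    (hNu : 0 ≤ Nu) (hNr : 0 ≤ Nr) (hSh0 : 0 ≤ Sh) (hSh1 : Sh ≤ 1)
    (hSc0 : 0 ≤ Sc) (hSc1 : Sc ≤ 1) (hdu0 : 0 ≤ du) (hduε : du ≤ ε)
    (hdr0 : 0 ≤ dr) (hdr1 : dr ≤ 1) (hsu0 : 0 ≤ su) (hsuε : su ≤ ε)
    (hsr0 : 0 ≤ sr) (hsr1 : sr ≤ 1) (hs1 : s1 ≤ 1) (hε : 0 ≤ ε) :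
    du * (Sh + Sc) * Nu + s1 + su * (dr * Nr * Sh + sr) ≤ 1 + ε * (2 * Nu + Nr + 2) := by
  have h1 : du * (Sh + Sc) * Nu ≤ ε * 2 * Nu :=
    mul_le_mul_of_nonneg_right (by nlinarith) hNu
  have h2 : dr * Nr * Sh ≤ Nr := by
    nlinarith [mul_nonneg (mul_nonneg hdr0 hNr) (sub_nonneg.mpr hSh1),
      mul_nonneg (sub_nonneg.mpr hdr1) hNr]
  have h3 : su * (dr * Nr * Sh + sr) ≤ ε * (Nr + 1) :=
    mul_le_mul hsuε (by linarith)
      (by positivity) hε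
  nlinarith [mul_nonneg hε hNu, mul_nonneg hε hNr]

private lemma gru_arith_B (Nu Nr Sh Sc du dr su sr s1 ε : ℝ)
    (hNu : 0 ≤ Nu) (hNr : 0 ≤ Nr) (hSh0 : 0 ≤ Sh) (hSh1 : Sh ≤ 1)
    (hSc0 : 0 ≤ Sc) (hSc1 : Sc ≤ 1) (hdu0 : 0 ≤ du) (hduε : du ≤ ε)
    (hdr0 : 0 ≤ dr) (hdrε : dr ≤ ε) (hsu0 : 0 ≤ su) (hsu1 : su ≤ 1)
    (hsr0 : 0 ≤ sr) (hsrε : sr ≤ ε) (hs1ε : s1 ≤ ε) (hε : 0 ≤ ε) :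
    du * (Sh + Sc) * Nu + s1 + su * (dr * Nr * Sh + sr) ≤ 1 + ε * (2 * Nu + Nr + 2) := by
  have h1 : du * (Sh + Sc) * Nu ≤ ε * 2 * Nu :=
    mul_le_mul_of_nonneg_right (by nlinarith) hNu
  have h2 : dr * Nr * Sh ≤ ε * Nr := by
    nlinarith [mul_nonneg (mul_nonneg hdr0 hNr) (sub_nonneg.mpr hSh1),
      mul_nonneg (sub_nonneg.mpr hdrε) hNr]
  have h3 : su * (dr * Nr * Sh + sr) ≤ 1 * (ε * Nr + ε) :=
    mul_le_mul hsu1 (by linarith)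
      (by positivity) (by norm_num)
  nlinarith [mul_nonneg hε hNu, mul_nonneg hε hNr]

private lemma gru_arith_C (Nu Nr Sh Sc du dr su sr s1 ε : ℝ)
    (hNu : 0 ≤ Nu) (hNr : 0 ≤ Nr) (hSh0 : 0 ≤ Sh) (hSh1 : Sh ≤ 1)
    (hSc0 : 0 ≤ Sc) (hSc1 : Sc ≤ 1) (hdu0 : 0 ≤ du) (hduε : du ≤ ε)
    (hdr0 : 0 ≤ dr) (hdrε : dr ≤ ε) (hsu0 : 0 ≤ su) (hsu1 : su ≤ 1)
    (hsr0 : 0 ≤ sr) (hsr1 : sr ≤ 1) (hs1ε : s1 ≤ ε) (hε : 0 ≤ ε) :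
    du * (Sh + Sc) * Nu + s1 + su * (dr * Nr * Sh + sr) ≤ 1 + ε * (2 * Nu + Nr + 2) := by
  have h1 : du * (Sh + Sc) * Nu ≤ ε * 2 * Nu :=
    mul_le_mul_of_nonneg_right (by nlinarith) hNu
  have h2 : dr * Nr * Sh ≤ ε * Nr := by
    nlinarith [mul_nonneg (mul_nonneg hdr0 hNr) (sub_nonneg.mpr hSh1),
      mul_nonneg (sub_nonneg.mpr hdrε) hNr]
  have h3 : su * (dr * Nr * Sh + sr) ≤ 1 * (ε * Nr + 1) :=
    mul_le_mul hsu1 (by linarith)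
      (by positivity) (by norm_num)
  nlinarith [mul_nonneg hε hNu, mul_nonneg hε hNr]

/-- Quantitative Corollary 1, second part: if `|h_i| ≤ 1` for all `i`, `ε ≥ 0`,
and the gates are within `ε` of constant 0/1 vectors — i.e. one of the following four cases
holds for all `i`: (a) `u(h)_i ≤ ε`; (b) `u(h)_i ≥ 1 - ε` and `r(h)_i ≤ ε`;
(c) `u(h)_i ≥ 1 - ε` and `r(h)_i ≥ 1 - ε`; (d) `u(h)_i ≤ ε` and (`r(h)_i ≥ 1 - ε` or
`r(h)_i ≤ ε`) — then `α + β ≤ 1 + ε (2‖U_u‖₂ + ‖U_r‖₂ + 2)`. -/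
theorem gru_alpha_beta_near_constant_gates {n m : ℕ} (x : Fin m → ℝ)
    (Wr Wu Wc : Matrix (Fin n) (Fin m) ℝ) (Ur Uu Uc : Matrix (Fin n) (Fin n) ℝ)
    (br bu bc : EuclideanSpace ℝ (Fin n)) (h : EuclideanSpace ℝ (Fin n))
    (hh : ∀ i, |h i| ≤ 1) (ε : ℝ) (hε : 0 ≤ ε) :
    let r : EuclideanSpace ℝ (Fin n) → EuclideanSpace ℝ (Fin n) :=
      fun h => WithLp.toLp 2 (fun i => sigmoid (Wr.mulVec x i + Ur.mulVec h i + br i))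
    let u : EuclideanSpace ℝ (Fin n) → EuclideanSpace ℝ (Fin n) :=
      fun h => WithLp.toLp 2 (fun i => sigmoid (Wu.mulVec x i + Uu.mulVec h i + bu i))
    let c : EuclideanSpace ℝ (Fin n) → EuclideanSpace ℝ (Fin n) :=
      fun h => WithLp.toLp 2 (fun i => Real.tanh (Wc.mulVec x i + Uc.mulVec (fun j => r h j * h j) i + bc i))
    let δu : ℝ := ⨆ i, u h i * (1 - u h i)
    let δr : ℝ := ⨆ i, r h i * (1 - r h i)
    let α : ℝ := δu * ((⨆ i, |h i|) + ⨆ i, |c h i|) * opNorm2 Uu + ⨆ i, (1 - u h i)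
    let β : ℝ := (⨆ i, u h i) * (δr * opNorm2 Ur * (⨆ i, |h i|) + ⨆ i, r h i)
    ((∀ i, u h i ≤ ε) ∨
     (∀ i, 1 - ε ≤ u h i ∧ r h i ≤ ε) ∨
     (∀ i, 1 - ε ≤ u h i ∧ 1 - ε ≤ r h i) ∨
     (∀ i, u h i ≤ ε ∧ (1 - ε ≤ r h i ∨ r h i ≤ ε))) →
    α + β ≤ 1 + ε * (2 * opNorm2 Uu + opNorm2 Ur + 2) := by
  intro r u c δu δr α β hcases
  have hNu : 0 ≤ opNorm2 Uu := norm_nonneg _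
  have hNr : 0 ≤ opNorm2 Ur := norm_nonneg _
  set Nu := opNorm2 Uu
  set Nr := opNorm2 Ur
  rcases Nat.eq_zero_or_pos n with hn | hn
  · subst hn
    have hE : IsEmpty (Fin 0) := Fin.isEmpty
    have hα : α = 0 := by
      simp only [α, δu, Real.iSup_of_isEmpty]
      ring
    have hβ : β = 0 := by
      simp only [β, Real.iSup_of_isEmpty]
      ring
    rw [hα, hβ]
    nlinarith
  · have i0 : Fin n := ⟨0, hn⟩
    haveI : Nonempty (Fin n) := ⟨i0⟩
    have bdd : ∀ f : Fin n → ℝ, BddAbove (Set.range f) :=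
      fun f => (Set.finite_range f).bddAbove
    -- basic gate bounds
    have hu0 : ∀ i, 0 < u h i := fun i => sigmoid_pos _
    have hu1 : ∀ i, u h i < 1 := fun i => sigmoid_lt_one _
    have hr0 : ∀ i, 0 < r h i := fun i => sigmoid_pos _
    have hr1 : ∀ i, r h i < 1 := fun i => sigmoid_lt_one _
    have hc1 : ∀ i, |c h i| ≤ 1 := fun i => abs_tanh_le_one _
    -- supremum bounds
    have hSh1 : (⨆ i, |h i|) ≤ 1 := ciSup_le hh
    have hSh0 : 0 ≤ ⨆ i, |h i| :=
      le_trans (abs_nonneg (h i0)) (le_ciSup (f := fun i => |h i|) (bdd _) i0)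
    have hSc1 : (⨆ i, |c h i|) ≤ 1 := ciSup_le hc1
    have hSc0 : 0 ≤ ⨆ i, |c h i| :=
      le_trans (abs_nonneg (c h i0)) (le_ciSup (f := fun i => |c h i|) (bdd _) i0)
    have hdu0 : 0 ≤ δu := by
      have := le_ciSup (f := fun i => u h i * (1 - u h i)) (bdd _) i0
      have h1 := hu0 i0; have h2 := hu1 i0
      simp only [δu]
      nlinarith
    have hdr0 : 0 ≤ δr := by
      have := le_ciSup (f := fun i => r h i * (1 - r h i)) (bdd _) i0
      have h1 := hr0 i0; have h2 := hr1 i0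
      simp only [δr]
      nlinarith
    have hdr1 : δr ≤ 1 := ciSup_le fun i => by nlinarith [hr0 i, hr1 i]
    have hsu0 : 0 ≤ ⨆ i, u h i :=
      le_trans (hu0 i0).le (le_ciSup (f := fun i => u h i) (bdd _) i0)
    have hsu1 : (⨆ i, u h i) ≤ 1 := ciSup_le fun i => (hu1 i).le
    have hsr0 : 0 ≤ ⨆ i, r h i :=
      le_trans (hr0 i0).le (le_ciSup (f := fun i => r h i) (bdd _) i0)
    have hsr1 : (⨆ i, r h i) ≤ 1 := ciSup_le fun i => (hr1 i).le
    have hs1u1 : (⨆ i, (1 - u h i)) ≤ 1 := ciSup_le fun i => by linarith [hu0 i]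
    have hs1u0 : 0 ≤ ⨆ i, (1 - u h i) :=
      le_trans (by linarith [hu1 i0]) (le_ciSup (f := fun i => 1 - u h i) (bdd _) i0)
    rcases hcases with hc | hc | hc | hc
    · -- case (a): u ≤ ε
      have hduε : δu ≤ ε := ciSup_le fun i => by nlinarith [hu0 i, hu1 i, hc i]
      have hsuε : (⨆ i, u h i) ≤ ε := ciSup_le fun i => hc i
      simp only [α, β]
      exact gru_arith_A _ _ _ _ _ _ _ _ _ _ hNu hNr hSh0 hSh1 hSc0 hSc1 hdu0 hduε
        hdr0 hdr1 hsu0 hsuε hsr0 hsr1 hs1u1 hε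
    · -- case (b): u ≥ 1 - ε, r ≤ ε
      have hduε : δu ≤ ε := ciSup_le fun i => by nlinarith [hu0 i, hu1 i, (hc i).1]
      have hdrε : δr ≤ ε := ciSup_le fun i => by nlinarith [hr0 i, hr1 i, (hc i).2]
      have hsrε : (⨆ i, r h i) ≤ ε := ciSup_le fun i => (hc i).2
      have hs1uε : (⨆ i, (1 - u h i)) ≤ ε := ciSup_le fun i => by linarith [(hc i).1]
      simp only [α, β]
      exact gru_arith_B _ _ _ _ _ _ _ _ _ _ hNu hNr hSh0 hSh1 hSc0 hSc1 hdu0 hduε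
        hdr0 hdrε hsu0 hsu1 hsr0 hsrε hs1uε hε
    · -- case (c): u ≥ 1 - ε, r ≥ 1 - ε
      have hduε : δu ≤ ε := ciSup_le fun i => by nlinarith [hu0 i, hu1 i, (hc i).1]
      have hdrε : δr ≤ ε := ciSup_le fun i => by nlinarith [hr0 i, hr1 i, (hc i).2]
      have hs1uε : (⨆ i, (1 - u h i)) ≤ ε := ciSup_le fun i => by linarith [(hc i).1]
      simp only [α, β]
      exact gru_arith_C _ _ _ _ _ _ _ _ _ _ hNu hNr hSh0 hSh1 hSc0 hSc1 hdu0 hduε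
        hdr0 hdrε hsu0 hsu1 hsr0 hsr1 hs1uε hε
    · -- case (d): u ≤ ε, r near 0 or 1
      have hduε : δu ≤ ε := ciSup_le fun i => by nlinarith [hu0 i, hu1 i, (hc i).1]
      have hsuε : (⨆ i, u h i) ≤ ε := ciSup_le fun i => (hc i).1
      simp only [α, β]
      exact gru_arith_A _ _ _ _ _ _ _ _ _ _ hNu hNr hSh0 hSh1 hSc0 hSc1 hdu0 hduε
        hdr0 hdr1 hsu0 hsuε hsr0 hsr1 hs1u1 hε
end
end

section
/- (Derivative of the scaled Cayley map) Fix a diagonal matrix D ∈ ℝ^{n×n} and define F(A) = (I + A)⁻¹ (I − A) D on the set of matrices A ∈ ℝ^{n×n} with I + A invertible. Then F is (Fréchet) differentiable at every such A, and its derivative in the direction Z ∈ ℝ^{n×n} is D F(A)[Z] = −(I + A)⁻¹ Z (F(A) + D). -/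
open Matrix

noncomputable section

/- Equip matrix space with its (elementwise sup) norm; in finite dimension all norms are
equivalent, so Fréchet differentiability is the standard one on `ℝ^{n×n}`. -/
attribute [local instance] Matrix.normedAddCommGroup Matrix.normedSpace

section Aux

variable {n : ℕ} {E : Type*} [NormedAddCommGroup E] [NormedSpace ℝ E]

theorem my_entry_diff {f : E → Matrix (Fin n) (Fin n) ℝ} {x : E}
    (hf : DifferentiableAt ℝ f x) (i j : Fin n) :
    DifferentiableAt ℝ (fun y => f y i j) x :=
  differentiableAt_pi.mp (differentiableAt_pi.mp hf i) j

theorem my_diff_of_entries {f : E → Matrix (Fin n) (Fin n) ℝ} {x : E}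
    (hf : ∀ i j, DifferentiableAt ℝ (fun y => f y i j) x) :
    DifferentiableAt ℝ f x :=
  differentiableAt_pi.mpr fun i => differentiableAt_pi.mpr fun j => hf i j

theorem my_diff_mul {f g : E → Matrix (Fin n) (Fin n) ℝ} {x : E}
    (hf : DifferentiableAt ℝ f x) (hg : DifferentiableAt ℝ g x) :
    DifferentiableAt ℝ (fun y => f y * g y) x := by
  apply my_diff_of_entries
  intro i j
  have h : (fun y => (f y * g y) i j) = fun y => ∑ k, f y i k * g y k j := by
    funext y; simp [Matrix.mul_apply]
  rw [h]
  exact DifferentiableAt.fun_sum fun k _ => (my_entry_diff hf i k).mul (my_entry_diff hg k j)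

theorem my_diff_det {f : E → Matrix (Fin n) (Fin n) ℝ} {x : E}
    (hf : DifferentiableAt ℝ f x) :
    DifferentiableAt ℝ (fun y => (f y).det) x := by
  simp only [Matrix.det_apply']
  refine DifferentiableAt.fun_sum fun σ _ => ?_
  have hp : DifferentiableAt ℝ (fun y => ∏ i, f y (σ i) i) x := by
    classical
    exact (HasFDerivAt.finset_prod (u := Finset.univ) (g := fun i y => f y (σ i) i)
      (fun i _ => (my_entry_diff hf (σ i) i).hasFDerivAt)).differentiableAt
  exact hp.const_mul _

theorem my_diff_adjugate {f : E → Matrix (Fin n) (Fin n) ℝ} {x : E}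
    (hf : DifferentiableAt ℝ f x) :
    DifferentiableAt ℝ (fun y => (f y).adjugate) x := by
  apply my_diff_of_entries
  intro i j
  simp only [Matrix.adjugate_apply]
  apply my_diff_det
  apply my_diff_of_entries
  intro a b
  simp only [Matrix.updateRow_apply]
  rcases eq_or_ne a j with rfl | h
  · simp only [if_pos rfl]
    exact differentiableAt_const _
  · simp only [if_neg h]
    exact my_entry_diff hf a b

theorem my_diff_inv {f : E → Matrix (Fin n) (Fin n) ℝ} {x : E}
    (hf : DifferentiableAt ℝ f x) (h : (f x).det ≠ 0) :
    DifferentiableAt ℝ (fun y => (f y)⁻¹) x := by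
  have he : (fun y => (f y)⁻¹) = fun y => ((f y).det)⁻¹ • (f y).adjugate := by
    funext y; rw [Matrix.inv_def, Ring.inverse_eq_inv]
  rw [he]
  exact ((my_diff_det hf).inv h).smul (my_diff_adjugate hf)

/-- Matrix multiplication as a continuous bilinear map (w.r.t. the entrywise sup norm). -/
def myMulCLM (n : ℕ) :
    Matrix (Fin n) (Fin n) ℝ →L[ℝ] Matrix (Fin n) (Fin n) ℝ →L[ℝ] Matrix (Fin n) (Fin n) ℝ :=
  LinearMap.mkContinuous₂ (LinearMap.mul ℝ (Matrix (Fin n) (Fin n) ℝ)) n (by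
    intro x y
    rw [LinearMap.mul_apply']
    rw [Matrix.norm_le_iff (by positivity)]
    intro i j
    rw [Matrix.mul_apply]
    calc ‖∑ k, x i k * y k j‖ ≤ ∑ k, ‖x i k * y k j‖ := norm_sum_le _ _
      _ ≤ ∑ _k : Fin n, ‖x‖ * ‖y‖ := Finset.sum_le_sum fun k _ => by
          rw [norm_mul]
          exact mul_le_mul (norm_entry_le_entrywise_sup_norm _)
            (norm_entry_le_entrywise_sup_norm _) (norm_nonneg _) (norm_nonneg _)
      _ = (n : ℝ) * ‖x‖ * ‖y‖ := by
          simp [Finset.sum_const, mul_assoc])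

@[simp] theorem myMulCLM_apply {n : ℕ} (x y : Matrix (Fin n) (Fin n) ℝ) :
    myMulCLM n x y = x * y := rfl

end Aux

/-- Derivative of the scaled Cayley map: for a fixed diagonal matrix `D`,
the map `F(A) = (I + A)⁻¹ (I - A) D` is Fréchet differentiable at every `A` with `I + A`
invertible, and its derivative in the direction `Z` is `D F(A)[Z] = -(I + A)⁻¹ Z (F(A) + D)`. -/
theorem scaled_cayley_deriv {n : ℕ} (d : Fin n → ℝ) (A : Matrix (Fin n) (Fin n) ℝ)
    (hA : IsUnit (1 + A)) :
    let D : Matrix (Fin n) (Fin n) ℝ := Matrix.diagonal d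
    let F : Matrix (Fin n) (Fin n) ℝ → Matrix (Fin n) (Fin n) ℝ :=
      fun A => (1 + A)⁻¹ * (1 - A) * D
    ∃ L : Matrix (Fin n) (Fin n) ℝ →L[ℝ] Matrix (Fin n) (Fin n) ℝ,
      HasFDerivAt F L A ∧
      ∀ Z : Matrix (Fin n) (Fin n) ℝ, L Z = -((1 + A)⁻¹ * Z * (F A + D)) := by
  intro D F
  let M := Matrix (Fin n) (Fin n) ℝ
  have hdetU : IsUnit (1 + A).det := (Matrix.isUnit_iff_isUnit_det _).mp hA
  have hdet : (1 + A).det ≠ 0 := hdetU.ne_zero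
  -- differentiability of the pieces
  have h1 : DifferentiableAt ℝ (fun X : M => 1 + X) A := differentiableAt_id.const_add 1
  have hinv : DifferentiableAt ℝ (fun X : M => (1 + X)⁻¹) A := my_diff_inv h1 hdet
  have h2 : DifferentiableAt ℝ (fun X : M => 1 - X) A := differentiableAt_id.const_sub 1
  have hF : DifferentiableAt ℝ F A :=
    my_diff_mul (my_diff_mul hinv h2) (differentiableAt_const D)
  set L := fderiv ℝ F A with hLdef
  have hL : HasFDerivAt F L A := hF.hasFDerivAt
  refine ⟨L, hL, ?_⟩
  -- product rule for G X = (1 + X) * F X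
  have hbil := (myMulCLM n).isBoundedBilinearMap
  have h1' : HasFDerivAt (fun X : M => 1 + X) (ContinuousLinearMap.id ℝ M) A :=
    (hasFDerivAt_id A).const_add 1
  have hpair : HasFDerivAt (fun X : M => ((1 + X : M), F X))
      ((ContinuousLinearMap.id ℝ M).prod L) A := h1'.prodMk hL
  have hG : HasFDerivAt (fun X : M => (1 + X) * F X)
      ((hbil.deriv ((1 + A : M), F A)).comp ((ContinuousLinearMap.id ℝ M).prod L)) A := by
    have := (hbil.hasFDerivAt ((1 + A : M), F A)).comp A hpair
    exact this
  -- eventual equality with the affine map X ↦ (1 - X) * D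
  have hcont : ContinuousAt (fun X : M => (1 + X).det) A :=
    (my_diff_det h1).continuousAt
  have hev : (fun X : M => (1 + X) * F X) =ᶠ[nhds A] fun X : M => (1 - X) * D := by
    filter_upwards [hcont.eventually_ne hdet] with X hX
    have hinvX : (1 + X) * (1 + X)⁻¹ = 1 :=
      Matrix.mul_nonsing_inv _ (isUnit_iff_ne_zero.mpr hX)
    show (1 + X) * ((1 + X)⁻¹ * (1 - X) * D) = (1 - X) * D
    rw [← mul_assoc, ← mul_assoc, hinvX, one_mul]
  -- derivative of the affine map
  have haff : HasFDerivAt (fun X : M => (1 - X) * D) (-(myMulCLM n).flip D) A := by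
    have h := ((myMulCLM n).flip D).hasFDerivAt (x := A)
    have h' : HasFDerivAt (fun X : M => D - (myMulCLM n).flip D X)
        (-(myMulCLM n).flip D) A := h.const_sub D
    have hfun : (fun X : M => D - (myMulCLM n).flip D X) = fun X : M => (1 - X) * D := by
      funext X
      change D - X * D = (1 - X) * D
      rw [sub_mul, one_mul]
    rwa [hfun] at h'
  have hG' : HasFDerivAt (fun X : M => (1 + X) * F X) (-(myMulCLM n).flip D) A :=
    (hev.hasFDerivAt_iff).mpr haff
  have huniq := hG.unique hG'
  intro Z
  have heqZ : (1 + A) * L Z + Z * F A = -(Z * D) := by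
    have := congrFun (congrArg DFunLike.coe huniq) Z
    exact this
  have hkey : (1 + A)⁻¹ * ((1 + A) * L Z) = L Z := by
    rw [← mul_assoc, Matrix.nonsing_inv_mul _ hdetU, one_mul]
  have h3 : (1 + A) * L Z = -(Z * D) - Z * F A := by
    linear_combination (norm := noncomm_ring) heqZ
  rw [← hkey, h3]
  noncomm_ring
end
end

section
/- (scoRNN gradient formula, unconstrained form) Fix a diagonal matrix D ∈ ℝ^{n×n} with D² = I and define F(A) = (I + A)⁻¹ (I − A) D for A ∈ ℝ^{n×n} with I + A invertible. Let L : ℝ^{n×n} → ℝ be differentiable at W = F(A), and let G ∈ ℝ^{n×n} be its gradient there, i.e. D L(W)[H] = tr(Gᵀ H) for all H ∈ ℝ^{n×n}. Then the composite A ↦ L(F(A)) is differentiable at A and, for every direction Z ∈ ℝ^{n×n}, D (L ∘ F)(A)[Z] = −tr(Vᵀ Z), where V = (I + A)⁻ᵀ G (D + Wᵀ). -/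
open Matrix

noncomputable section

/- Equip matrix space with its (elementwise sup) norm; in finite dimension all norms are
equivalent, so Fréchet differentiability is the standard one on `ℝ^{n×n}`. -/
attribute [local instance] Matrix.normedAddCommGroup Matrix.normedSpace


abbrev Mn (n : ℕ) := Matrix (Fin n) (Fin n) ℝ

variable {n : ℕ}

def mulLR (P Q : Mn n) : Mn n →L[ℝ] Mn n :=
  LinearMap.toContinuousLinearMap
    { toFun := fun Z => P * Z * Q
      map_add' := fun x y => by noncomm_ring
      map_smul' := fun c x => by simp [Matrix.mul_smul, Matrix.smul_mul] }

@[simp] lemma mulLR_apply (P Q Z : Mn n) : mulLR P Q Z = P * Z * Q := rfl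

def mulCLM : Mn n →L[ℝ] Mn n →L[ℝ] Mn n :=
  LinearMap.toContinuousLinearMap
    { toFun := fun X => LinearMap.toContinuousLinearMap (LinearMap.mulLeft ℝ X)
      map_add' := fun X Y => by ext Z; simp [add_mul]
      map_smul' := fun c X => by ext Z; simp [smul_mul_assoc] }

@[simp] lemma mulCLM_apply (X Y : Mn n) : mulCLM X Y = X * Y := rfl

lemma mul_norm_bound : ∃ C > 0, ∀ X Y : Mn n, ‖X * Y‖ ≤ C * ‖X‖ * ‖Y‖ := by
  obtain ⟨K, hK⟩ : ∃ K : ℝ, ∀ X Y : Mn n, ‖mulCLM X Y‖ ≤ K * ‖X‖ * ‖Y‖ :=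
    ⟨_, fun X Y => (mulCLM (n := n)).le_opNorm₂ X Y⟩
  refine ⟨max K 0 + 1, by positivity, fun X Y => ?_⟩
  have := hK X Y
  simp only [mulCLM_apply] at this
  nlinarith [this, mul_nonneg (by linarith [le_max_left K 0] : (0:ℝ) ≤ max K 0 + 1 - K)
    (mul_nonneg (norm_nonneg X) (norm_nonneg Y))]

lemma continuousAt_inv_mat (X₀ : Mn n) (h : IsUnit X₀) :
    ContinuousAt (fun X : Mn n => X⁻¹) X₀ := by
  have hdet : X₀.det ≠ 0 := by
    have := (Matrix.isUnit_iff_isUnit_det X₀).mp h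
    exact isUnit_iff_ne_zero.mp this
  have heq : (fun X : Mn n => X⁻¹) = fun X => Ring.inverse X.det • X.adjugate := by
    funext X; rw [Matrix.inv_def]
  rw [heq]
  have hdetc : Continuous fun X : Mn n => X.det := Continuous.matrix_det continuous_id
  have h1 : ContinuousAt (fun X : Mn n => Ring.inverse X.det) X₀ := by
    simp only [Ring.inverse_eq_inv']
    exact (continuousAt_inv₀ hdet).comp hdetc.continuousAt
  exact h1.smul (Continuous.matrix_adjugate continuous_id).continuousAt

lemma eventually_isUnit (X₀ : Mn n) (h : IsUnit X₀) :
    ∀ᶠ H in nhds (0 : Mn n), IsUnit (X₀ + H) := by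
  have hopen : IsOpen {X : Mn n | X.det ≠ 0} :=
    (isOpen_ne (x := (0:ℝ))).preimage (Continuous.matrix_det continuous_id)
  have hmem : X₀ ∈ {X : Mn n | X.det ≠ 0} :=
    isUnit_iff_ne_zero.mp ((Matrix.isUnit_iff_isUnit_det X₀).mp h)
  have hev : ∀ᶠ X in nhds X₀, X ∈ {X : Mn n | X.det ≠ 0} := hopen.eventually_mem hmem
  have ht : Filter.Tendsto (fun H : Mn n => X₀ + H) (nhds 0) (nhds X₀) := by
    exact (continuous_add_left X₀).tendsto' 0 X₀ (by simp)
  filter_upwards [ht.eventually hev] with H hH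
  exact (Matrix.isUnit_iff_isUnit_det _).mpr (isUnit_iff_ne_zero.mpr hH)

lemma hasFDerivAt_matinv (X₀ : Mn n) (h : IsUnit X₀) :
    HasFDerivAt (fun X : Mn n => X⁻¹) (mulLR (-(X₀⁻¹)) X₀⁻¹) X₀ := by
  refine hasFDerivAt_iff_isLittleO_nhds_zero.2 ?_
  set B := X₀⁻¹ with hB
  have hX₀B : X₀ * B = 1 := Matrix.mul_nonsing_inv X₀ ((Matrix.isUnit_iff_isUnit_det X₀).mp h)
  have key : ∀ H : Mn n, IsUnit (X₀ + H) →
      (X₀ + H)⁻¹ - B - mulLR (-B) B H = ((X₀ + H)⁻¹ * H * B) * (H * B) := by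
    intro H hH
    set Y := X₀ + H with hY
    have hYinv : Y⁻¹ * Y = 1 := Matrix.nonsing_inv_mul Y ((Matrix.isUnit_iff_isUnit_det Y).mp hH)
    have hYB : Y * B = 1 + H * B := by
      rw [hY, add_mul, hX₀B]
    have h2 : B = Y⁻¹ + Y⁻¹ * H * B := by
      have h3 : Y⁻¹ * (Y * B) = Y⁻¹ * (1 + H * B) := by rw [hYB]
      rwa [← mul_assoc, hYinv, one_mul, mul_add, mul_one, ← mul_assoc] at h3
    have hBY : B - Y⁻¹ = Y⁻¹ * H * B := by
      have h4 := congrArg (fun X => X - Y⁻¹) h2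
      simpa using h4
    have hdiff : Y⁻¹ - B = -(Y⁻¹ * H * B) := by rw [← hBY]; abel
    calc Y⁻¹ - B - mulLR (-B) B H = Y⁻¹ - B + B * H * B := by
          rw [mulLR_apply]; noncomm_ring
      _ = -(Y⁻¹ * H * B) + B * H * B := by rw [hdiff]
      _ = (B - Y⁻¹) * H * B := by noncomm_ring
      _ = (Y⁻¹ * H * B) * (H * B) := by rw [hBY, mul_assoc]
  obtain ⟨C, hC, hCb⟩ := (mul_norm_bound (n := n))
  have hcont : Filter.Tendsto (fun H : Mn n => (X₀ + H)⁻¹) (nhds 0) (nhds B) := by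
    have h1 : Filter.Tendsto (fun H : Mn n => X₀ + H) (nhds 0) (nhds X₀) := by
      exact (continuous_add_left X₀).tendsto' 0 X₀ (by simp)
    exact (continuousAt_inv_mat X₀ h).tendsto.comp h1
  have hbnd : ∀ᶠ H in nhds (0 : Mn n), ‖(X₀ + H)⁻¹‖ ≤ ‖B‖ + 1 :=
    hcont.norm.eventually_le_const (by linarith : ‖B‖ < ‖B‖ + 1)
  have hO : (fun H : Mn n => ((X₀ + H)⁻¹ * H * B) * (H * B)) =O[nhds 0]
      (fun H : Mn n => ‖H‖ * ‖H‖) := by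
    rw [Asymptotics.isBigO_iff]
    refine ⟨C * (C * (C * (‖B‖ + 1)) * ‖B‖) * (C * ‖B‖), ?_⟩
    filter_upwards [hbnd] with H hH
    have e0 : ‖(X₀ + H)⁻¹ * H‖ ≤ C * (‖B‖ + 1) * ‖H‖ := by
      calc ‖(X₀ + H)⁻¹ * H‖ ≤ C * ‖(X₀ + H)⁻¹‖ * ‖H‖ := hCb _ _
        _ ≤ C * (‖B‖ + 1) * ‖H‖ := by gcongr
    have e1 : ‖(X₀ + H)⁻¹ * H * B‖ ≤ C * (C * (‖B‖ + 1) * ‖H‖) * ‖B‖ := by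
      calc ‖(X₀ + H)⁻¹ * H * B‖ ≤ C * ‖(X₀ + H)⁻¹ * H‖ * ‖B‖ := hCb _ _
        _ ≤ C * (C * (‖B‖ + 1) * ‖H‖) * ‖B‖ := by gcongr
    have e2 : ‖H * B‖ ≤ C * ‖H‖ * ‖B‖ := hCb _ _
    calc ‖(X₀ + H)⁻¹ * H * B * (H * B)‖
        ≤ C * ‖(X₀ + H)⁻¹ * H * B‖ * ‖H * B‖ := hCb _ _
      _ ≤ C * (C * (C * (‖B‖ + 1) * ‖H‖) * ‖B‖) * (C * ‖H‖ * ‖B‖) := by gcongr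
      _ = C * (C * (C * (‖B‖ + 1)) * ‖B‖) * (C * ‖B‖) * ‖(‖H‖ * ‖H‖)‖ := by
          rw [Real.norm_of_nonneg (by positivity)]; ring
  have hlo : (fun H : Mn n => ‖H‖ * ‖H‖) =o[nhds (0 : Mn n)] (fun H => H) := by
    rw [Asymptotics.isLittleO_iff]
    intro ε hε
    have hev : ∀ᶠ H in nhds (0 : Mn n), ‖H‖ < ε :=
      (continuous_norm.tendsto' (0 : Mn n) 0 (by simp)).eventually_lt_const hε
    filter_upwards [hev] with H hH
    rw [Real.norm_of_nonneg (by positivity)]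
    nlinarith [norm_nonneg H]
  have hfin : (fun H : Mn n => ((X₀ + H)⁻¹ * H * B) * (H * B)) =o[nhds 0]
      (fun H : Mn n => H) := hO.trans_isLittleO hlo
  refine hfin.congr' ?_ (by rfl)
  filter_upwards [eventually_isUnit X₀ h] with H hH
  exact (key H hH).symm

lemma trace_helper {n : ℕ} (X Y Z W : Mn n) :
    (X * (Y * Z * W)).trace = ((W * (X * Y)) * Z).trace := by
  have h1 : X * (Y * Z * W) = (X * Y * Z) * W := by noncomm_ring
  rw [h1, Matrix.trace_mul_comm]
  congr 1
  noncomm_ring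

/-- scoRNN gradient formula, unconstrained form: with `D` diagonal, `D² = I`,
`F(A) = (I + A)⁻¹ (I - A) D`, `I + A` invertible, `L : ℝ^{n×n} → ℝ` differentiable at
`W = F(A)` with gradient `G` (i.e. `D L(W)[H] = tr(Gᵀ H)` for all `H`), the composite
`A ↦ L(F(A))` is differentiable at `A` and its derivative in any direction `Z` is
`-tr(Vᵀ Z)`, where `V = (I + A)⁻ᵀ G (D + Wᵀ)`. -/
theorem scoRNN_gradient_formula {n : ℕ} (d : Fin n → ℝ) (hd : ∀ i, d i * d i = 1)
    (A G : Matrix (Fin n) (Fin n) ℝ) (hA : IsUnit (1 + A))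
    (L : Matrix (Fin n) (Fin n) ℝ → ℝ) (L' : Matrix (Fin n) (Fin n) ℝ →L[ℝ] ℝ)
    (hL : HasFDerivAt L L' ((1 + A)⁻¹ * (1 - A) * Matrix.diagonal d))
    (hG : ∀ H : Matrix (Fin n) (Fin n) ℝ, L' H = (Gᵀ * H).trace) :
    let D : Matrix (Fin n) (Fin n) ℝ := Matrix.diagonal d
    let W : Matrix (Fin n) (Fin n) ℝ := (1 + A)⁻¹ * (1 - A) * D
    let V : Matrix (Fin n) (Fin n) ℝ := ((1 + A)⁻¹)ᵀ * G * (D + Wᵀ)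
    ∃ L'' : Matrix (Fin n) (Fin n) ℝ →L[ℝ] ℝ,
      HasFDerivAt (fun A => L ((1 + A)⁻¹ * (1 - A) * D)) L'' A ∧
      ∀ Z : Matrix (Fin n) (Fin n) ℝ, L'' Z = -(Vᵀ * Z).trace := by
  intro D W V
  have hD : D = Matrix.diagonal d := rfl
  have hW : W = (1 + A)⁻¹ * (1 - A) * D := rfl
  have hV : V = ((1 + A)⁻¹)ᵀ * G * (D + Wᵀ) := rfl
  clear_value D W V
  rw [← hD] at hL
  have hplus : HasFDerivAt (fun X : Mn n => 1 + X) (ContinuousLinearMap.id ℝ (Mn n)) A := by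
    exact (hasFDerivAt_id A).const_add (1 : Mn n)
  have hinv : HasFDerivAt (fun X : Mn n => (1 + X)⁻¹)
      ((mulLR (-(1 + A)⁻¹) (1 + A)⁻¹).comp (ContinuousLinearMap.id ℝ (Mn n))) A :=
    (hasFDerivAt_matinv (1 + A) hA).comp A hplus
  have hone : HasFDerivAt (fun X : Mn n => 1 - X) (-(ContinuousLinearMap.id ℝ (Mn n))) A := by
    exact (hasFDerivAt_id A).const_sub (1 : Mn n)
  have hmul := (mulCLM (n := n)).hasFDerivAt_of_bilinear hinv hone
  change HasFDerivAt (fun y : Mn n => (1 + y)⁻¹ * (1 - y)) _ A at hmul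
  have hmulD := ((mulLR (1 : Mn n) D).hasFDerivAt (x := (1 + A)⁻¹ * (1 - A))).comp A hmul
  simp only [Function.comp_def, mulLR_apply, one_mul] at hmulD
  have hcomp := hL.comp A hmulD
  refine ⟨_, hcomp, fun Z => ?_⟩
  have hval : (L'.comp ((mulLR (1 : Mn n) D).comp
      ((mulCLM (n := n)).precompR (Mn n) ((1 + A)⁻¹) (-(ContinuousLinearMap.id ℝ (Mn n))) +
        (mulCLM (n := n)).precompL (Mn n)
          ((mulLR (-(1 + A)⁻¹) (1 + A)⁻¹).comp (ContinuousLinearMap.id ℝ (Mn n))) (1 - A)))) Z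
      = L' (-((1 + A)⁻¹ * Z * W + (1 + A)⁻¹ * Z * D)) := by
    change L' (1 * ((1 + A)⁻¹ * -Z + (-(1 + A)⁻¹ * Z * (1 + A)⁻¹) * (1 - A)) * D) = _
    congr 1
    rw [hW]
    noncomm_ring
  refine Eq.trans hval ?_
  rw [hG]
  have hDt : Dᵀ = D := by rw [hD]; exact Matrix.diagonal_transpose d
  have hVt : Vᵀ = (D + W) * (Gᵀ * (1 + A)⁻¹) := by
    rw [hV, Matrix.transpose_mul, Matrix.transpose_mul, Matrix.transpose_add,
      Matrix.transpose_transpose, Matrix.transpose_transpose, hDt]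
  rw [hVt]
  calc (Gᵀ * -((1 + A)⁻¹ * Z * W + (1 + A)⁻¹ * Z * D)).trace
      = -((Gᵀ * ((1 + A)⁻¹ * Z * W)).trace + (Gᵀ * ((1 + A)⁻¹ * Z * D)).trace) := by
        rw [mul_neg, mul_add, Matrix.trace_neg, Matrix.trace_add]
    _ = -(((W * (Gᵀ * (1 + A)⁻¹)) * Z).trace + ((D * (Gᵀ * (1 + A)⁻¹)) * Z).trace) := by
        rw [trace_helper, trace_helper]
    _ = -(((D + W) * (Gᵀ * (1 + A)⁻¹) * Z).trace) := by
        congr 1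
        rw [← Matrix.trace_add]
        congr 1
        noncomm_ring
end
end

section
/- (scoRNN gradient formula on the skew-symmetric subspace) In the setting where F(A) = (I + A)⁻¹ (I − A) D with D diagonal, D² = I, I + A invertible, L : ℝ^{n×n} → ℝ differentiable at W = F(A) with gradient G (i.e. D L(W)[H] = tr(Gᵀ H)), and V = (I + A)⁻ᵀ G (D + Wᵀ): for every skew-symmetric direction Z ∈ ℝ^{n×n} (Zᵀ = −Z), the directional derivative of A ↦ L(F(A)) at A in direction Z equals (1/2) tr((Vᵀ − V)ᵀ Z). In other words, the Riemannian gradient of L ∘ F at A with respect to the Frobenius inner product, restricted to the subspace of skew-symmetric matrices, is (1/2)(Vᵀ − V), which is itself skew-symmetric. -/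
open Matrix

noncomputable section

/- Equip matrix space with its (elementwise sup) norm; in finite dimension all norms are
equivalent, so Fréchet differentiability is the standard one on `ℝ^{n×n}`. -/
attribute [local instance] Matrix.normedAddCommGroup Matrix.normedSpace
variable {n : ℕ}

lemma diff_entry (i j : Fin n) :
    Differentiable ℝ (fun B : Matrix (Fin n) (Fin n) ℝ => B i j) :=
  (((ContinuousLinearMap.proj (R := ℝ) (φ := fun _ : Fin n => ℝ) j).comp
    (ContinuousLinearMap.proj (R := ℝ) (φ := fun _ : Fin n => Fin n → ℝ) i)).differentiable)

lemma diff_row (i : Fin n) :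
    Differentiable ℝ (fun B : Matrix (Fin n) (Fin n) ℝ => B i) :=
  (ContinuousLinearMap.proj (R := ℝ) (φ := fun _ : Fin n => Fin n → ℝ) i).differentiable

lemma diff_det :
    Differentiable ℝ (fun B : Matrix (Fin n) (Fin n) ℝ => B.det) := by
  simp only [Matrix.det_apply']
  intro B
  refine DifferentiableAt.fun_sum fun σ _ => DifferentiableAt.const_mul ?_ _
  exact (HasFDerivAt.finset_prod (u := Finset.univ)
    (g := fun (i : Fin n) (B : Matrix (Fin n) (Fin n) ℝ) => B (σ i) i)
    (fun i _ => (diff_entry (σ i) i B).hasFDerivAt)).differentiableAt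

lemma diff_updateRow (j : Fin n) (c : Fin n → ℝ) :
    Differentiable ℝ (fun B : Matrix (Fin n) (Fin n) ℝ => B.updateRow j c) := by
  have : Differentiable ℝ (fun B : Matrix (Fin n) (Fin n) ℝ => (B.updateRow j c : Fin n → Fin n → ℝ)) := by
    refine differentiable_pi.2 ?_
    intro i
    rcases eq_or_ne i j with h | h
    · subst h
      simp only [Matrix.updateRow_self]
      exact differentiable_const c
    · simp only [Matrix.updateRow_ne h]
      exact diff_row i
  exact this

lemma diff_adjugate :
    Differentiable ℝ (fun B : Matrix (Fin n) (Fin n) ℝ => B.adjugate) := by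
  have : Differentiable ℝ (fun B : Matrix (Fin n) (Fin n) ℝ => (B.adjugate : Fin n → Fin n → ℝ)) := by
    refine differentiable_pi.2 ?_
    intro i
    rw [differentiable_pi]
    intro k
    simp only [Matrix.adjugate_apply]
    exact diff_det.comp (diff_updateRow k (Pi.single i 1))
  exact this

lemma diffAt_inv {X : Matrix (Fin n) (Fin n) ℝ} (h : X.det ≠ 0) :
    DifferentiableAt ℝ (fun B : Matrix (Fin n) (Fin n) ℝ => B⁻¹) X := by
  have e : (fun B : Matrix (Fin n) (Fin n) ℝ => B⁻¹)
      = fun B => (B.det)⁻¹ • B.adjugate := by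
    funext B; rw [Matrix.inv_def, Ring.inverse_eq_inv']
  rw [e]
  exact ((diff_det.differentiableAt).inv h).smul diff_adjugate.differentiableAt

lemma mulBB (n : ℕ) : IsBoundedBilinearMap ℝ
    (fun p : Matrix (Fin n) (Fin n) ℝ × Matrix (Fin n) (Fin n) ℝ => p.1 * p.2) where
  add_left x₁ x₂ y := add_mul x₁ x₂ y
  smul_left c x y := smul_mul_assoc c x y
  add_right x y₁ y₂ := mul_add x y₁ y₂
  smul_right c x y := mul_smul_comm c x y
  bound := by
    refine ⟨n + 1, by positivity, fun x y => ?_⟩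
    rw [Matrix.norm_le_iff (by positivity)]
    intro i j
    calc ‖(x * y) i j‖ = |∑ k, x i k * y k j| := by rw [Matrix.mul_apply]; rfl
      _ ≤ ∑ k, |x i k * y k j| := Finset.abs_sum_le_sum_abs _ _
      _ ≤ ∑ _k : Fin n, ‖x‖ * ‖y‖ := by
          refine Finset.sum_le_sum fun k _ => ?_
          rw [abs_mul]
          exact mul_le_mul (Matrix.norm_entry_le_entrywise_sup_norm x)
            (Matrix.norm_entry_le_entrywise_sup_norm y) (abs_nonneg _) (norm_nonneg _)
      _ = (n : ℝ) * (‖x‖ * ‖y‖) := by simp [Finset.sum_const, mul_assoc]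
      _ ≤ (n + 1) * ‖x‖ * ‖y‖ := by
          rw [mul_assoc]
          exact mul_le_mul_of_nonneg_right (by linarith) (by positivity)


/-- scoRNN gradient formula on the skew-symmetric subspace: with `D` diagonal,
`D² = I`, `F(A) = (I + A)⁻¹ (I - A) D`, `I + A` invertible, `L` differentiable at `W = F(A)`
with gradient `G`, and `V = (I + A)⁻ᵀ G (D + Wᵀ)`: for every skew-symmetric direction `Z`,
the directional derivative of `A ↦ L(F(A))` at `A` in direction `Z` equals
`(1/2) tr((Vᵀ - V)ᵀ Z)`; moreover `(1/2)(Vᵀ - V)` is itself skew-symmetric. -/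
theorem scoRNN_riemannian_gradient {n : ℕ} (d : Fin n → ℝ) (hd : ∀ i, d i * d i = 1)
    (A G : Matrix (Fin n) (Fin n) ℝ) (hA : IsUnit (1 + A))
    (L : Matrix (Fin n) (Fin n) ℝ → ℝ) (L' : Matrix (Fin n) (Fin n) ℝ →L[ℝ] ℝ)
    (hL : HasFDerivAt L L' ((1 + A)⁻¹ * (1 - A) * Matrix.diagonal d))
    (hG : ∀ H : Matrix (Fin n) (Fin n) ℝ, L' H = (Gᵀ * H).trace) :
    let D : Matrix (Fin n) (Fin n) ℝ := Matrix.diagonal d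
    let W : Matrix (Fin n) (Fin n) ℝ := (1 + A)⁻¹ * (1 - A) * D
    let V : Matrix (Fin n) (Fin n) ℝ := ((1 + A)⁻¹)ᵀ * G * (D + Wᵀ)
    (∀ Z : Matrix (Fin n) (Fin n) ℝ, Zᵀ = -Z →
      fderiv ℝ (fun A => L ((1 + A)⁻¹ * (1 - A) * D)) A Z
        = (1 / 2) * ((Vᵀ - V)ᵀ * Z).trace) ∧
    ((1 / 2 : ℝ) • (Vᵀ - V))ᵀ = -((1 / 2 : ℝ) • (Vᵀ - V)) := by
  intro D W V
  have hD : D = Matrix.diagonal d := rfl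
  have hW : W = (1 + A)⁻¹ * (1 - A) * D := rfl
  have hV : V = ((1 + A)⁻¹)ᵀ * G * (D + Wᵀ) := rfl
  have hdetU : IsUnit (1 + A).det := (Matrix.isUnit_iff_isUnit_det _).mp hA
  have hdet : (1 + A).det ≠ 0 := hdetU.ne_zero
  have hplus : HasFDerivAt (fun B : Matrix (Fin n) (Fin n) ℝ => 1 + B)
      (ContinuousLinearMap.id ℝ _) A := by
    exact (hasFDerivAt_id A).const_add (1 : Matrix (Fin n) (Fin n) ℝ)
  have hgdiff : DifferentiableAt ℝ (fun B : Matrix (Fin n) (Fin n) ℝ => (1 + B)⁻¹) A :=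
    (diffAt_inv hdet).comp A hplus.differentiableAt
  set g' := fderiv ℝ (fun B : Matrix (Fin n) (Fin n) ℝ => (1 + B)⁻¹) A with hg'def
  have hg : HasFDerivAt (fun B : Matrix (Fin n) (Fin n) ℝ => (1 + B)⁻¹) g' A :=
    hgdiff.hasFDerivAt
  have hev : (fun B : Matrix (Fin n) (Fin n) ℝ => (1 + B)⁻¹ * (1 + B))
      =ᶠ[nhds A] (fun _ => 1) := by
    have hc : ContinuousAt (fun B : Matrix (Fin n) (Fin n) ℝ => (1 + B).det) A :=
      (Continuous.matrix_det (continuous_const.add continuous_id)).continuousAt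
    filter_upwards [hc.eventually_ne hdet] with B hB
    exact Matrix.nonsing_inv_mul _ (isUnit_iff_ne_zero.mpr hB)
  have hmulg : HasFDerivAt (fun B : Matrix (Fin n) (Fin n) ℝ => (1 + B)⁻¹ * (1 + B))
      (((mulBB n).deriv ((1 + A)⁻¹, 1 + A)).comp
        (g'.prod (ContinuousLinearMap.id ℝ _))) A :=
    by have := ((mulBB n).hasFDerivAt ((1 + A)⁻¹, 1 + A)).comp A (hg.prodMk hplus); exact this
  have hzero : (((mulBB n).deriv ((1 + A)⁻¹, 1 + A)).comp
      (g'.prod (ContinuousLinearMap.id ℝ _)))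
      = (0 : Matrix (Fin n) (Fin n) ℝ →L[ℝ] Matrix (Fin n) (Fin n) ℝ) :=
    (hmulg.congr_of_eventuallyEq hev.symm).unique (hasFDerivAt_const _ A)
  have hg'Z : ∀ Z : Matrix (Fin n) (Fin n) ℝ,
      g' Z = -((1 + A)⁻¹ * Z * (1 + A)⁻¹) := by
    intro Z
    have h0 : (1 + A)⁻¹ * Z + g' Z * (1 + A) = 0 := by
      have := congrFun (congrArg DFunLike.coe hzero) Z
      exact this
    have hx : g' Z * (1 + A) = -((1 + A)⁻¹ * Z) := by linear_combination (norm := noncomm_ring) h0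
    calc g' Z = g' Z * ((1 + A) * (1 + A)⁻¹) := by
          rw [Matrix.mul_nonsing_inv _ hdetU, mul_one]
      _ = g' Z * (1 + A) * (1 + A)⁻¹ := by rw [mul_assoc]
      _ = -((1 + A)⁻¹ * Z) * (1 + A)⁻¹ := by rw [hx]
      _ = -((1 + A)⁻¹ * Z * (1 + A)⁻¹) := by rw [neg_mul]
  have hminus : HasFDerivAt (fun B : Matrix (Fin n) (Fin n) ℝ => 1 - B)
      (-(ContinuousLinearMap.id ℝ (Matrix (Fin n) (Fin n) ℝ))) A :=
    (hasFDerivAt_id A).const_sub 1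
  have hF1 : HasFDerivAt (fun B : Matrix (Fin n) (Fin n) ℝ => (1 + B)⁻¹ * (1 - B))
      (((mulBB n).deriv ((1 + A)⁻¹, 1 - A)).comp
        (g'.prod (-(ContinuousLinearMap.id ℝ _)))) A :=
    by have := ((mulBB n).hasFDerivAt ((1 + A)⁻¹, 1 - A)).comp A (hg.prodMk hminus); exact this
  have hF : HasFDerivAt
      (fun B : Matrix (Fin n) (Fin n) ℝ => (1 + B)⁻¹ * (1 - B) * Matrix.diagonal d)
      (((mulBB n).deriv ((1 + A)⁻¹ * (1 - A), Matrix.diagonal d)).comp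
        ((((mulBB n).deriv ((1 + A)⁻¹, 1 - A)).comp
          (g'.prod (-(ContinuousLinearMap.id ℝ _)))).prod 0)) A :=
    by have := ((mulBB n).hasFDerivAt ((1 + A)⁻¹ * (1 - A), Matrix.diagonal d)).comp A
          (hF1.prodMk (hasFDerivAt_const (Matrix.diagonal d) A))
       exact this
  have htot : HasFDerivAt
      (L ∘ fun B : Matrix (Fin n) (Fin n) ℝ => (1 + B)⁻¹ * (1 - B) * Matrix.diagonal d)
      (L'.comp (((mulBB n).deriv ((1 + A)⁻¹ * (1 - A), Matrix.diagonal d)).comp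
        ((((mulBB n).deriv ((1 + A)⁻¹, 1 - A)).comp
          (g'.prod (-(ContinuousLinearMap.id ℝ _)))).prod 0))) A := by
    have := hL.comp A hF
    exact this
  have hfd := htot.fderiv
  constructor
  · intro Z hZ
    rw [hV, hW, hD, show (fun A : Matrix (Fin n) (Fin n) ℝ =>
        L ((1 + A)⁻¹ * (1 - A) * Matrix.diagonal d))
      = (L ∘ fun B : Matrix (Fin n) (Fin n) ℝ => (1 + B)⁻¹ * (1 - B) * Matrix.diagonal d)
      from rfl]
    rw [hfd]
    change L' ((1 + A)⁻¹ * (1 - A) * 0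
      + ((1 + A)⁻¹ * -Z + g' Z * (1 - A)) * Matrix.diagonal d) = _
    rw [hG, hg'Z, mul_zero, zero_add]
    set P := (1 + A)⁻¹ with hPdef
    set Dg := Matrix.diagonal d with hDgdef
    set V0 := Pᵀ * G * (Dg + (P * (1 - A) * Dg)ᵀ) with hV0
    have hVT : V0ᵀ = (Dg + P * (1 - A) * Dg) * (Gᵀ * P) := by
      rw [hV0]
      simp only [Matrix.transpose_mul, Matrix.transpose_add, Matrix.transpose_transpose,
        Matrix.diagonal_transpose, hDgdef]
    have hskew : (V0 * Z).trace = -((V0ᵀ * Z).trace) := by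
      calc (V0 * Z).trace = ((V0 * Z)ᵀ).trace := (Matrix.trace_transpose _).symm
        _ = (Zᵀ * V0ᵀ).trace := by rw [Matrix.transpose_mul]
        _ = (-Z * V0ᵀ).trace := by rw [hZ]
        _ = -((Z * V0ᵀ).trace) := by rw [Matrix.neg_mul, Matrix.trace_neg]
        _ = -((V0ᵀ * Z).trace) := by rw [Matrix.trace_mul_comm]
    have hmat : Gᵀ * ((P * -Z + -(P * Z * P) * (1 - A)) * Dg)
        = -((Gᵀ * P * Z) * (Dg + P * (1 - A) * Dg)) := by noncomm_ring
    rw [hmat, Matrix.trace_neg,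
      Matrix.trace_mul_comm (Gᵀ * P * Z) (Dg + P * (1 - A) * Dg),
      Matrix.transpose_sub, Matrix.transpose_transpose, Matrix.sub_mul, Matrix.trace_sub,
      hskew, hVT,
      show (Dg + P * (1 - A) * Dg) * (Gᵀ * P * Z)
        = (Dg + P * (1 - A) * Dg) * (Gᵀ * P) * Z by noncomm_ring]
    ring
  · rw [Matrix.transpose_smul, Matrix.transpose_sub, Matrix.transpose_transpose,
      ← smul_neg, neg_sub]
end
end
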